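/- For every even k ≥ 2, C₊,k ⊆ P_{X₊,ℓ_k}: no forbidden string of X₊ occurs in a concatenation of admissible blocks from B₊,k-1 alternating with constant blocks (+1)^{2ℓ_{k-1}-1}. Symmetrically, for every odd k ≥ 3, C₋,k ⊆ P_{X₋,ℓ_k}. -/

import Mathlib

/-- The three-letter alphabet `Σ = {-1, 0, +1}`. -/
inductive Letter : Type
  | neg : Letter
  | zero : Letter
  | pos : Letter
deriving DecidableEq

instance instFintypeLetter : Fintype Letter :=
  ⟨{Letter.neg, Letter.zero, Letter.pos}, fun x => by cases x <;> simp⟩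

/-- `f₀(ω)`: the frequency of the symbol `0` in the finite string `ω`. -/
noncomputable def f0 {n : ℕ} (ω : Fin n → Letter) : ℝ :=
  ((Finset.univ.filter fun i => ω i = Letter.zero).card : ℝ) / n

/-- The binary entropy `H(t) = -t log t - (1-t) log (1-t)` (with `0 log 0 = 0`). -/
noncomputable def H (t : ℝ) : ℝ := -(t * Real.log t) - (1 - t) * Real.log (1 - t)

/-- `η` occurs as a consecutive substring of `ω` starting at position `s`. -/
def occursAt {p n : ℕ} (η : Fin p → Letter) (ω : Fin n → Letter) (s : ℕ) : Prop :=
  ∃ _h : s + p ≤ n, ∀ i : Fin p, η i = ω ⟨s + i.val, by have := i.isLt; omega⟩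

/-- `η` occurs as a consecutive substring of `ω`. -/
def occursIn {p n : ℕ} (η : Fin p → Letter) (ω : Fin n → Letter) : Prop :=
  ∃ s, occursAt η ω s

/-- The symbol forbidden at level `k`: `-1` for odd `k`, `+1` for even `k`. -/
def bad (k : ℕ) : Letter := if k % 2 = 1 then Letter.neg else Letter.pos

/-- The forbidden sets `F_k` of the construction of Section 4: strings of length `2ℓ_k - 1`
containing the bad symbol, or over the good alphabet with frequency of zeros `≥ r_k`,
or over the good alphabet containing a forbidden string of an earlier level of the same parity. -/
def Forb (ℓ : ℕ → ℕ) (r : ℕ → ℚ) (k : ℕ) : Set (Fin (2 * ℓ k - 1) → Letter) :=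
  {ω | ∃ i, ω i = bad k} ∪
    {ω | (∀ i, ω i ≠ bad k) ∧ (r k : ℝ) ≤ f0 ω} ∪
    {ω | (∀ i, ω i ≠ bad k) ∧
      ∃ k' : Fin k, 1 ≤ k'.val ∧ k'.val % 2 = k % 2 ∧
        ∃ η ∈ Forb ℓ r k'.val, occursIn η ω}
termination_by k
decreasing_by exact k'.isLt

open Classical in
/-- The locally admissible strings of length `2n-1`:  no string from `⋃_{k' ≡ parity, k' ≥ 1} F_{k'}`
occurs as a consecutive substring.  `parity = 1` corresponds to `X₊`, `parity = 0` to `X₋`. -/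
noncomputable def Padm (ℓ : ℕ → ℕ) (r : ℕ → ℚ) (parity : ℕ) (n : ℕ) :
    Finset (Fin (2 * n - 1) → Letter) :=
  Finset.univ.filter fun ω =>
    ∀ k, 1 ≤ k → k % 2 = parity → ∀ η ∈ Forb ℓ r k, ¬ occursIn η ω

/-- `m_k = (2ℓ_k - 1)/(2ℓ_{k-1} - 1)`. -/
def mblk (ℓ : ℕ → ℕ) (k : ℕ) : ℕ := (2 * ℓ k - 1) / (2 * ℓ (k - 1) - 1)

open Classical in
/-- Strings of length `N` which are concatenations of `m` blocks of length `L`,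
the blocks at the even positions (`0`-based) taken from `B` and the blocks at odd
positions equal to the constant block `g^L`. -/
noncomputable def CfromB {L : ℕ} (N m : ℕ) (g : Letter) (B : Finset (Fin L → Letter)) :
    Finset (Fin N → Letter) :=
  Finset.univ.filter fun ω => ∀ j < m,
    if j % 2 = 0 then ∃ η ∈ B, occursAt η ω (j * L)
    else occursAt (fun _ : Fin L => g) ω (j * L)

/-- `B₊,k = P_{X₊,ℓ_k} ∖ {(+1)^{2ℓ_k-1}}`. -/
noncomputable def Bplus (ℓ : ℕ → ℕ) (r : ℕ → ℚ) (k : ℕ) :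
    Finset (Fin (2 * ℓ k - 1) → Letter) :=
  Padm ℓ r 1 (ℓ k) \ {fun _ => Letter.pos}

/-- `B₋,k = P_{X₋,ℓ_k} ∖ {(-1)^{2ℓ_k-1}}`. -/
noncomputable def Bminus (ℓ : ℕ → ℕ) (r : ℕ → ℚ) (k : ℕ) :
    Finset (Fin (2 * ℓ k - 1) → Letter) :=
  Padm ℓ r 0 (ℓ k) \ {fun _ => Letter.neg}

/-- `C₊,k`: alternating concatenations of blocks from `B₊,k-1` and constant `+1` blocks. -/
noncomputable def Cplus (ℓ : ℕ → ℕ) (r : ℕ → ℚ) (k : ℕ) :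
    Finset (Fin (2 * ℓ k - 1) → Letter) :=
  CfromB (2 * ℓ k - 1) (mblk ℓ k) Letter.pos (Bplus ℓ r (k - 1))

/-- `C₋,k`: alternating concatenations of blocks from `B₋,k-1` and constant `-1` blocks. -/
noncomputable def Cminus (ℓ : ℕ → ℕ) (r : ℕ → ℚ) (k : ℕ) :
    Finset (Fin (2 * ℓ k - 1) → Letter) :=
  CfromB (2 * ℓ k - 1) (mblk ℓ k) Letter.neg (Bminus ℓ r (k - 1))

/-- The subshift `X_k ⊆ Σ^ℤ`: bi-infinite sequences in which no string of `F_k` occurs. -/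
def Xk (ℓ : ℕ → ℕ) (r : ℕ → ℚ) (k : ℕ) : Set (ℤ → Letter) :=
  {x | ∀ η ∈ Forb ℓ r k, ∀ j : ℤ, ¬ (∀ i : Fin (2 * ℓ k - 1), η i = x (j + (i.val : ℤ)))}

/-- `X₊ = ⋂_{m ≥ 1} X_{2m-1}`. -/
def Xplus (ℓ : ℕ → ℕ) (r : ℕ → ℚ) : Set (ℤ → Letter) :=
  {x | ∀ m, 1 ≤ m → x ∈ Xk ℓ r (2 * m - 1)}

/-- `X₋ = ⋂_{m ≥ 1} X_{2m}`. -/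
def Xminus (ℓ : ℕ → ℕ) (r : ℕ → ℚ) : Set (ℤ → Letter) :=
  {x | ∀ m, 1 ≤ m → x ∈ Xk ℓ r (2 * m)}


lemma bad_mod (k : ℕ) : bad k = bad (k % 2) := by simp [bad, Nat.mod_mod_of_dvd]

lemma Forb_iff (ℓ : ℕ → ℕ) (r : ℕ → ℚ) (k : ℕ) (ω : Fin (2 * ℓ k - 1) → Letter) :
    ω ∈ Forb ℓ r k ↔ (∃ i, ω i = bad k) ∨
      ((∀ i, ω i ≠ bad k) ∧ (r k : ℝ) ≤ f0 ω) ∨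
      ((∀ i, ω i ≠ bad k) ∧
        ∃ k' : Fin k, 1 ≤ k'.val ∧ k'.val % 2 = k % 2 ∧
          ∃ η ∈ Forb ℓ r k'.val, occursIn η ω) := by
  rw [Forb]
  simp [Set.mem_union, Set.mem_setOf_eq, or_assoc]

lemma mem_Padm {ℓ : ℕ → ℕ} {r : ℕ → ℚ} {parity n : ℕ} {ω : Fin (2 * n - 1) → Letter} :
    ω ∈ Padm ℓ r parity n ↔
      ∀ k, 1 ≤ k → k % 2 = parity → ∀ η ∈ Forb ℓ r k, ¬ occursIn η ω := by
  simp [Padm]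
lemma ell_le {ℓ : ℕ → ℕ} (hlmono : ∀ k, 1 ≤ k → ℓ k < ℓ (k + 1)) :
    ∀ a b, 1 ≤ a → a ≤ b → ℓ a ≤ ℓ b := by
  intro a b ha hab
  induction b with
  | zero => omega
  | succ n ih =>
    rcases Nat.lt_or_ge a (n+1) with h | h
    · exact le_trans (ih (by omega)) (le_of_lt (hlmono n (by omega)))
    · have : a = n + 1 := by omega
      subst this; exact le_rfl

lemma ell_lt {ℓ : ℕ → ℕ} (hlmono : ∀ k, 1 ≤ k → ℓ k < ℓ (k + 1)) :
    ∀ a b, 1 ≤ a → a < b → ℓ a < ℓ b := by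
  intro a b ha hab
  calc ℓ a < ℓ (a+1) := hlmono a ha
  _ ≤ ℓ b := ell_le hlmono (a+1) b (by omega) (by omega)

lemma ell_four {ℓ : ℕ → ℕ} (hl1 : ℓ 1 = 4) (hlmono : ∀ k, 1 ≤ k → ℓ k < ℓ (k + 1)) :
    ∀ k, 1 ≤ k → 4 ≤ ℓ k := by
  intro k hk
  calc 4 = ℓ 1 := hl1.symm
  _ ≤ ℓ k := ell_le hlmono 1 k le_rfl hk

/-- A constant string with a letter that is neither `0` nor the bad letter is never forbidden. -/
lemma const_not_forb {ℓ : ℕ → ℕ} {r : ℕ → ℚ} (hrpos : ∀ k, 1 ≤ k → 0 < r k)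
    {g : Letter} (hgz : g ≠ Letter.zero) :
    ∀ k, 1 ≤ k → g ≠ bad k → ∀ η ∈ Forb ℓ r k, ¬ (∀ i, η i = g) := by
  intro k
  induction k using Nat.strong_induction_on with
  | _ k ih =>
    intro hk hgb η hη hconst
    rw [Forb_iff] at hη
    rcases hη with ⟨i, hi⟩ | ⟨_, hf⟩ | ⟨_, k', hk'1, hk'par, η', hη', t, ht, hocc⟩
    · exact hgb (hconst i ▸ hi)
    · have hz : (Finset.univ.filter fun i : Fin (2 * ℓ k - 1) => η i = Letter.zero) = ∅ := by
        apply Finset.filter_eq_empty_iff.mpr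
        intro i _
        rw [hconst i]; exact hgz
      have : f0 η = 0 := by simp [f0, hz]
      have hr := hrpos k hk
      rw [this] at hf
      have : (0:ℝ) < (r k : ℝ) := by exact_mod_cast hr
      linarith
    · refine ih k'.val k'.isLt hk'1 ?_ η' hη' ?_
      · rwa [bad_mod, hk'par, ← bad_mod]
      · intro i
        rw [hocc i, hconst]
/-- Strings in `Padm` of length at least `2ℓ k₀ - 1` contain no bad letter of level `k₀`. -/
lemma no_bad_of_padm {ℓ : ℕ → ℕ} {r : ℕ → ℚ} {parity n : ℕ} {ω : Fin (2 * n - 1) → Letter}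
    (hω : ω ∈ Padm ℓ r parity n) (k₀ : ℕ) (hk₀ : 1 ≤ k₀) (hpar : k₀ % 2 = parity)
    (hl : 1 ≤ ℓ k₀) (hln : ℓ k₀ ≤ n) : ∀ i, ω i ≠ bad k₀ := by
  intro i hbad
  set q := 2 * ℓ k₀ - 1 with hq
  have hq1 : 1 ≤ q := by omega
  have hqn : q ≤ 2 * n - 1 := by omega
  set s := min i.val (2 * n - 1 - q) with hs
  have hsq : s + q ≤ 2 * n - 1 := by
    have : s ≤ 2 * n - 1 - q := min_le_right _ _
    omega
  set η : Fin q → Letter := fun j => ω ⟨s + j.val, by have := j.isLt; omega⟩ with hη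
  have hmem : η ∈ Forb ℓ r k₀ := by
    rw [Forb_iff]
    left
    have hsi : s ≤ i.val := min_le_left _ _
    have hiq : i.val < s + q := by
      have hi := i.isLt
      rcases Nat.le_total i.val (2 * n - 1 - q) with h | h
      · have : s = i.val := by omega
        omega
      · have : s = 2 * n - 1 - q := by omega
        omega
    refine ⟨⟨i.val - s, by omega⟩, ?_⟩
    have : (⟨s + (i.val - s), by omega⟩ : Fin (2 * n - 1)) = i := by
      apply Fin.ext; simp; omega
    simpa [hη, this] using hbad
  exact mem_Padm.mp hω k₀ hk₀ hpar η hmem ⟨s, hsq, fun j => rfl⟩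
/-- Key lemma: no forbidden string of the right parity occurs in `β g^∞`,
where `β` is admissible and `g` is the good constant letter. -/
lemma Bsuf {ℓ : ℕ → ℕ} {r : ℕ → ℚ} (hl1 : ℓ 1 = 4) (hlmono : ∀ k, 1 ≤ k → ℓ k < ℓ (k+1))
    (hrpos : ∀ k, 1 ≤ k → 0 < r k)
    {parity n : ℕ} {β : Fin (2*n-1) → Letter} (hβ : β ∈ Padm ℓ r parity n)
    {g : Letter} (hgb : g ≠ bad parity) (hgz : g ≠ Letter.zero)
    (hβb : ∀ i, β i ≠ bad parity) :
    ∀ k', 1 ≤ k' → k' % 2 = parity → ℓ k' ≤ n →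
      ∀ η ∈ Forb ℓ r k', ∀ t,
        ¬ ∀ i : Fin (2 * ℓ k' - 1), η i =
            if h : t + i.val < 2*n-1 then β ⟨t + i.val, h⟩ else g := by
  intro k'
  induction k' using Nat.strong_induction_on with
  | _ k' ih =>
  intro hk1 hkpar hkn η hη t hocc
  have hbadk : bad k' = bad parity := by rw [bad_mod, hkpar]
  have hl4 : 4 ≤ ℓ k' := ell_four hl1 hlmono k' hk1
  have hn4 : 4 ≤ n := le_trans hl4 hkn
  have hp1 : 1 ≤ 2 * ℓ k' - 1 := by omega
  have hpn : 2 * ℓ k' - 1 ≤ 2*n-1 := by omega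
  have hnb : ∀ i, η i ≠ bad k' := by
    intro i
    rw [hocc i, hbadk]
    split
    · exact hβb _
    · exact hgb
  rcases Nat.lt_or_ge t (2*n-1) with htlt | htge
  swap
  · -- occurrence entirely in the constant part
    have hconst : ∀ i, η i = g := fun i => by rw [hocc i, dif_neg (by omega)]
    exact const_not_forb hrpos hgz k' hk1 (hbadk ▸ hgb) η hη hconst
  rcases le_or_gt (t + (2 * ℓ k' - 1)) (2*n-1) with hin | hstr
  · -- occurrence entirely inside β
    refine mem_Padm.mp hβ k' hk1 hkpar η hη ⟨t, hin, fun i => ?_⟩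
    rw [hocc i, dif_pos (by have := i.isLt; omega)]
  · -- straddling occurrence
    set θ : Fin (2 * ℓ k' - 1) → Letter :=
      fun i => β ⟨2*n-1 - (2 * ℓ k' - 1) + i.val, by have := i.isLt; omega⟩ with hθ
    have hθocc : occursIn θ β := ⟨2*n-1 - (2 * ℓ k' - 1), by omega, fun i => rfl⟩
    have hηg : ∀ i : Fin (2 * ℓ k' - 1), 2*n-1-t ≤ i.val → η i = g := by
      intro i hi; rw [hocc i, dif_neg (by omega)]
    have hηθ : ∀ i : Fin (2 * ℓ k' - 1), i.val < 2*n-1-t →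
        ∀ j : Fin (2 * ℓ k' - 1), j.val = (2 * ℓ k' - 1) - (2*n-1-t) + i.val → η i = θ j := by
      intro i hi j hj
      rw [hocc i, dif_pos (by omega)]
      simp only [hθ]
      congr 1
      apply Fin.ext
      show t + i.val = 2*n-1 - (2 * ℓ k' - 1) + j.val
      omega
    rw [Forb_iff] at hη
    rcases hη with ⟨i, hi⟩ | ⟨_, hf⟩ | ⟨_, k'', h1, hpar'', η', hη', t', ht', hocc'⟩
    · exact hnb i hi
    · -- frequency case: compare with the suffix window θ of β
      set f : Fin (2 * ℓ k' - 1) → Fin (2 * ℓ k' - 1) :=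
        fun i => ⟨((2 * ℓ k' - 1) - (2*n-1-t) + i.val) % (2 * ℓ k' - 1),
          Nat.mod_lt _ (by omega)⟩ with hf'
      have hcard : (Finset.univ.filter fun i : Fin (2 * ℓ k' - 1) => η i = Letter.zero).card ≤
          (Finset.univ.filter fun i : Fin (2 * ℓ k' - 1) => θ i = Letter.zero).card := by
        apply Finset.card_le_card_of_injOn f
        · intro i hi
          simp only [Finset.coe_filter, Set.mem_setOf_eq, Finset.mem_filter,
            Finset.mem_univ, true_and] at hi ⊢
          have hia : i.val < 2*n-1-t := by
            by_contra hge
            rw [hηg i (by omega)] at hi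
            exact hgz hi
          rw [← hηθ i hia (f i) ?_]
          · exact hi
          · simp only [hf']
            exact Nat.mod_eq_of_lt (by omega)
        · intro x hx y hy hxy
          simp only [Finset.coe_filter, Set.mem_setOf_eq, Finset.mem_univ, true_and] at hx hy
          have hxa : x.val < 2*n-1-t := by
            by_contra hge
            rw [hηg x (by omega)] at hx
            exact hgz hx
          have hya : y.val < 2*n-1-t := by
            by_contra hge
            rw [hηg y (by omega)] at hy
            exact hgz hy
          have := congrArg Fin.val hxy
          simp only [hf'] at this
          rw [Nat.mod_eq_of_lt (by omega), Nat.mod_eq_of_lt (by omega)] at this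
          apply Fin.ext
          omega
      have hfθ : (r k' : ℝ) ≤ f0 θ := by
        refine le_trans hf ?_
        unfold f0
        gcongr
      have hθF : θ ∈ Forb ℓ r k' := by
        rw [Forb_iff]; right; left
        exact ⟨fun i => by rw [hbadk]; exact hβb _, hfθ⟩
      exact mem_Padm.mp hβ k' hk1 hkpar θ hθF hθocc
    · -- contains an earlier forbidden string: recurse
      refine ih k''.val k''.isLt h1 (by rw [hpar'', hkpar])
        (le_trans (ell_le hlmono k''.val k' h1 (le_of_lt k''.isLt)) hkn) η' hη' (t + t') ?_
      intro i
      have hocc2 := hocc ⟨t' + i.val, by have := i.isLt; omega⟩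
      rw [hocc' i, hocc2]
      simp only [show t + (t' + i.val) = t + t' + i.val from by omega]
/-- Mirror key lemma: no forbidden string of the right parity occurs in `g^{2n-1} β g^∞`. -/
lemma Bpre {ℓ : ℕ → ℕ} {r : ℕ → ℚ} (hl1 : ℓ 1 = 4) (hlmono : ∀ k, 1 ≤ k → ℓ k < ℓ (k+1))
    (hrpos : ∀ k, 1 ≤ k → 0 < r k)
    {parity n : ℕ} {β : Fin (2*n-1) → Letter} (hβ : β ∈ Padm ℓ r parity n)
    {g : Letter} (hgb : g ≠ bad parity) (hgz : g ≠ Letter.zero)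
    (hβb : ∀ i, β i ≠ bad parity) :
    ∀ k', 1 ≤ k' → k' % 2 = parity → ℓ k' ≤ n →
      ∀ η ∈ Forb ℓ r k', ∀ t,
        ¬ ∀ i : Fin (2 * ℓ k' - 1), η i =
            if t + i.val < 2*n-1 then g
            else if h2 : t + i.val - (2*n-1) < 2*n-1 then β ⟨t + i.val - (2*n-1), h2⟩ else g := by
  intro k'
  induction k' using Nat.strong_induction_on with
  | _ k' ih =>
  intro hk1 hkpar hkn η hη t hocc
  have hbadk : bad k' = bad parity := by rw [bad_mod, hkpar]
  have hl4 : 4 ≤ ℓ k' := ell_four hl1 hlmono k' hk1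
  have hn4 : 4 ≤ n := le_trans hl4 hkn
  have hp1 : 1 ≤ 2 * ℓ k' - 1 := by omega
  have hpn : 2 * ℓ k' - 1 ≤ 2*n-1 := by omega
  rcases Nat.lt_or_ge t (2*n-1) with htlt | htge
  swap
  · -- occurrence entirely beyond the constant prefix: reduce to `Bsuf`
    refine Bsuf hl1 hlmono hrpos hβ hgb hgz hβb k' hk1 hkpar hkn η hη (t - (2*n-1)) ?_
    intro i
    rw [hocc i, if_neg (by omega)]
    simp only [show t + i.val - (2*n-1) = t - (2*n-1) + i.val from by omega]
  rcases le_or_gt (t + (2 * ℓ k' - 1)) (2*n-1) with hin | hstr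
  · -- occurrence entirely in the constant prefix
    have hconst : ∀ i, η i = g := fun i => by
      rw [hocc i, if_pos (by have := i.isLt; omega)]
    exact const_not_forb hrpos hgz k' hk1 (hbadk ▸ hgb) η hη hconst
  · -- straddling occurrence: compare with the prefix window θ of β
    have hnb : ∀ i, η i ≠ bad k' := by
      intro i
      rw [hocc i, hbadk]
      split
      · exact hgb
      · split
        · exact hβb _
        · exact hgb
    set θ : Fin (2 * ℓ k' - 1) → Letter :=
      fun i => β ⟨i.val, by have := i.isLt; omega⟩ with hθ
    have hθocc : occursIn θ β := ⟨0, by omega, fun i => by simp [hθ]⟩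
    have hηg : ∀ i : Fin (2 * ℓ k' - 1), i.val < 2*n-1-t → η i = g := by
      intro i hi; rw [hocc i, if_pos (by omega)]
    have hηθ : ∀ i : Fin (2 * ℓ k' - 1), 2*n-1-t ≤ i.val →
        ∀ j : Fin (2 * ℓ k' - 1), j.val = i.val - (2*n-1-t) → η i = θ j := by
      intro i hi j hj
      rw [hocc i, if_neg (by omega), dif_pos (by have := i.isLt; omega)]
      simp only [hθ]
      congr 1
      apply Fin.ext
      show t + i.val - (2*n-1) = j.val
      omega
    rw [Forb_iff] at hη
    rcases hη with ⟨i, hi⟩ | ⟨_, hf⟩ | ⟨_, k'', h1, hpar'', η', hη', t', ht', hocc'⟩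
    · exact hnb i hi
    · set f : Fin (2 * ℓ k' - 1) → Fin (2 * ℓ k' - 1) :=
        fun i => ⟨i.val - (2*n-1-t), by have := i.isLt; omega⟩ with hf'
      have hcard : (Finset.univ.filter fun i : Fin (2 * ℓ k' - 1) => η i = Letter.zero).card ≤
          (Finset.univ.filter fun i : Fin (2 * ℓ k' - 1) => θ i = Letter.zero).card := by
        apply Finset.card_le_card_of_injOn f
        · intro i hi
          simp only [Finset.coe_filter, Set.mem_setOf_eq, Finset.mem_filter,
            Finset.mem_univ, true_and] at hi ⊢
          have hia : 2*n-1-t ≤ i.val := by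
            by_contra hge
            rw [hηg i (by omega)] at hi
            exact hgz hi
          rw [← hηθ i hia (f i) rfl]
          exact hi
        · intro x hx y hy hxy
          simp only [Finset.coe_filter, Set.mem_setOf_eq, Finset.mem_univ, true_and] at hx hy
          have hxa : 2*n-1-t ≤ x.val := by
            by_contra hge
            rw [hηg x (by omega)] at hx
            exact hgz hx
          have hya : 2*n-1-t ≤ y.val := by
            by_contra hge
            rw [hηg y (by omega)] at hy
            exact hgz hy
          have := congrArg Fin.val hxy
          simp only [hf'] at this
          apply Fin.ext
          omega
      have hfθ : (r k' : ℝ) ≤ f0 θ := by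
        refine le_trans hf ?_
        unfold f0
        gcongr
      have hθF : θ ∈ Forb ℓ r k' := by
        rw [Forb_iff]; right; left
        exact ⟨fun i => by rw [hbadk]; exact hβb _, hfθ⟩
      exact mem_Padm.mp hβ k' hk1 hkpar θ hθF hθocc
    · refine ih k''.val k''.isLt h1 (by rw [hpar'', hkpar])
        (le_trans (ell_le hlmono k''.val k' h1 (le_of_lt k''.isLt)) hkn) η' hη' (t + t') ?_
      intro i
      have hocc2 := hocc ⟨t' + i.val, by have := i.isLt; omega⟩
      rw [hocc' i, hocc2]
      simp only [show t + (t' + i.val) = t + t' + i.val from by omega]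
/-- The general form of the theorem: an alternating concatenation of admissible
blocks and constant good blocks is admissible. -/
lemma CfromB_subset_Padm {ℓ : ℕ → ℕ} {r : ℕ → ℚ}
    (hl1 : ℓ 1 = 4) (hlmono : ∀ k, 1 ≤ k → ℓ k < ℓ (k+1)) (hrpos : ∀ k, 1 ≤ k → 0 < r k)
    (hdvd : ∀ k, 2 ≤ k → (2 * ℓ (k - 1) - 1) ∣ (2 * ℓ k - 1))
    {parity k : ℕ} (hk2 : 2 ≤ k) (hkpar : k % 2 ≠ parity)
    {g : Letter} (hgb : g ≠ bad parity) (hgz : g ≠ Letter.zero)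
    (hbase : ∃ k₀, 1 ≤ k₀ ∧ k₀ % 2 = parity ∧ ℓ k₀ ≤ ℓ (k-1))
    {B : Finset (Fin (2 * ℓ (k-1) - 1) → Letter)}
    (hB : ∀ β ∈ B, β ∈ Padm ℓ r parity (ℓ (k-1))) :
    CfromB (2 * ℓ k - 1) (mblk ℓ k) g B ⊆ Padm ℓ r parity (ℓ k) := by
  intro ω hω
  simp only [CfromB, Finset.mem_filter, Finset.mem_univ, true_and] at hω
  rw [mem_Padm]
  rintro k' hk'1 hk'par η hη ⟨s, hsle, hoccω⟩
  obtain ⟨k₀, hk₀1, hk₀par, hk₀l⟩ := hbase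
  have hlk1 : 4 ≤ ℓ (k-1) := ell_four hl1 hlmono (k-1) (by omega)
  have hlk : 4 ≤ ℓ k := ell_four hl1 hlmono k (by omega)
  have hlk' : 4 ≤ ℓ k' := ell_four hl1 hlmono k' hk'1
  set L := 2 * ℓ (k-1) - 1 with hL
  set N := 2 * ℓ k - 1 with hN
  set m := mblk ℓ k with hm
  have hL0 : 0 < L := by omega
  have hmN : m * L = N := by
    rw [hm, mblk]
    exact Nat.div_mul_cancel (hdvd k hk2)
  -- k' < k, so the forbidden string is short
  have hk'k : k' < k := by
    rcases Nat.lt_trichotomy k' k with h | h | h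
    · exact h
    · exact absurd (h ▸ hk'par) hkpar
    · exfalso
      have : ℓ k < ℓ k' := ell_lt hlmono k k' (by omega) h
      omega
  have hpk' : 2 * ℓ k' - 1 ≤ L := by
    have : ℓ k' ≤ ℓ (k-1) := ell_le hlmono k' (k-1) hk'1 (by omega)
    omega
  set j := s / L with hj
  set t := s % L with ht
  have htL : t < L := Nat.mod_lt _ hL0
  have hdm : j * L + t = s := by rw [mul_comm]; exact Nat.div_add_mod s L
  have hsN : s + (2 * ℓ k' - 1) ≤ N := hsle
  have hjm : j < m := by
    rw [hj]
    exact (Nat.div_lt_iff_lt_mul hL0).mpr (by omega)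
  have hexp : (j+1) * L = j * L + L := by ring
  -- the bad letter of level k₀ is the bad letter of the parity
  have hbad₀ : bad k₀ = bad parity := by rw [bad_mod, hk₀par]
  rcases Nat.even_or_odd j with hje | hjo
  · -- block j is a β-block; use `Bsuf`
    have hje0 : j % 2 = 0 := Nat.even_iff.mp hje
    have hblk := hω j hjm
    rw [if_pos hje0] at hblk
    obtain ⟨β, hβB, hβle, hβocc⟩ := hblk
    have hβ : β ∈ Padm ℓ r parity (ℓ (k-1)) := hB β hβB
    have hβb : ∀ i, β i ≠ bad parity := by
      have := no_bad_of_padm hβ k₀ hk₀1 hk₀par (by have := ell_four hl1 hlmono k₀ hk₀1; omega)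
        hk₀l
      rwa [hbad₀] at this
    refine Bsuf hl1 hlmono hrpos hβ hgb hgz hβb k' hk'1 hk'par
      (by omega : ℓ k' ≤ ℓ (k-1)) η hη t fun i => ?_
    have hiN : s + i.val < N := by have := i.isLt; omega
    rw [hoccω i]
    by_cases hu : t + i.val < 2 * ℓ (k-1) - 1
    · rw [dif_pos hu]
      rw [hβocc ⟨t + i.val, hu⟩]
      congr 1
      apply Fin.ext
      show s + i.val = j * L + (t + i.val)
      omega
    · rw [dif_neg hu]
      have hj1m : j + 1 < m := by
        have h1 : (j+1) * L < m * L := by omega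
        exact lt_of_mul_lt_mul_right h1 (Nat.zero_le L)
      have hblk1 := hω (j+1) hj1m
      rw [if_neg (by omega)] at hblk1
      obtain ⟨hle1, hg1⟩ := hblk1
      have := hg1 ⟨t + i.val - L, by omega⟩
      simp only at this
      rw [this]
      congr 1
      apply Fin.ext
      show s + i.val = (j+1) * L + (t + i.val - L)
      omega
  · -- block j is a constant block
    have hjo1 : j % 2 = 1 := Nat.odd_iff.mp hjo
    have hblk := hω j hjm
    rw [if_neg (by omega)] at hblk
    obtain ⟨hle0, hg0⟩ := hblk
    have hbadk' : bad k' = bad parity := by rw [bad_mod, hk'par]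
    rcases le_or_gt (s + (2 * ℓ k' - 1)) ((j+1) * L) with hin | hstr
    · -- entirely inside the constant block
      refine const_not_forb hrpos hgz k' hk'1 (hbadk' ▸ hgb) η hη fun i => ?_
      have := hg0 ⟨s + i.val - j * L, by have := i.isLt; omega⟩
      simp only at this
      rw [hoccω i, this]
      congr 1
      apply Fin.ext
      show s + i.val = j * L + (s + i.val - j * L)
      omega
    · -- straddles into the β-block j+1; use `Bpre`
      have hj1m : j + 1 < m := by
        have h1 : (j+1) * L < m * L := by omega
        exact lt_of_mul_lt_mul_right h1 (Nat.zero_le L)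
      have hblk1 := hω (j+1) hj1m
      rw [if_pos (by omega)] at hblk1
      obtain ⟨β, hβB, hβle, hβocc⟩ := hblk1
      have hβ : β ∈ Padm ℓ r parity (ℓ (k-1)) := hB β hβB
      have hβb : ∀ i, β i ≠ bad parity := by
        have := no_bad_of_padm hβ k₀ hk₀1 hk₀par (by have := ell_four hl1 hlmono k₀ hk₀1; omega)
          hk₀l
        rwa [hbad₀] at this
      refine Bpre hl1 hlmono hrpos hβ hgb hgz hβb k' hk'1 hk'par
        (by omega : ℓ k' ≤ ℓ (k-1)) η hη t fun i => ?_
      have hiN : s + i.val < N := by have := i.isLt; omega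
      rw [hoccω i]
      by_cases hu : t + i.val < 2 * ℓ (k-1) - 1
      · rw [if_pos hu]
        have := hg0 ⟨t + i.val, hu⟩
        simp only at this
        rw [this]
        congr 1
        apply Fin.ext
        show s + i.val = j * L + (t + i.val)
        omega
      · rw [if_neg hu, dif_pos (by omega)]
        rw [hβocc ⟨t + i.val - (2 * ℓ (k-1) - 1), by omega⟩]
        congr 1
        apply Fin.ext
        show s + i.val = (j+1) * L + (t + i.val - (2 * ℓ (k-1) - 1))
        omega
theorem C_subset_admissible (ℓ : ℕ → ℕ) (r : ℕ → ℚ)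
    (hl1 : ℓ 1 = 4) (hlmono : ∀ k, 1 ≤ k → ℓ k < ℓ (k + 1))
    (hr1 : r 1 = 1 / 2) (hrpos : ∀ k, 1 ≤ k → 0 < r k) (hrhalf : ∀ k, 1 ≤ k → r k ≤ 1 / 2)
    (hdvd : ∀ k, 2 ≤ k → (2 * ℓ (k - 1) - 1) ∣ (2 * ℓ k - 1))
    (hS1 : ∀ k, 1 ≤ k → 1 < ((2 * ℓ k - 1 : ℕ) : ℝ) * (r k : ℝ))
    (hS2 : ∀ k, 1 ≤ k → 10 * H ((r (k + 1) : ℝ)) ≤ 1 / 2 * (r k : ℝ) * Real.log 2)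
    (hS3 : ∀ k, 1 ≤ k →
      10 * ((r (k + 1) : ℝ) + 2 * (((2 * ℓ (k + 1) - 1 : ℕ) : ℝ))⁻¹ ^ 2 *
        Real.log ((2 * ℓ (k + 1) - 1 : ℕ) : ℝ)) ≤ ((4 * ℓ k - 2 : ℕ) : ℝ)⁻¹)
    (hS4 : ∀ k, 1 ≤ k → 2 ^ (4 * ℓ k) ≤ ℓ (k + 1)) :
    (∀ k, 2 ≤ k → k % 2 = 0 → Cplus ℓ r k ⊆ Padm ℓ r 1 (ℓ k)) ∧
    (∀ k, 3 ≤ k → k % 2 = 1 → Cminus ℓ r k ⊆ Padm ℓ r 0 (ℓ k)) := by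
  constructor
  · intro k hk2 hkeven
    show CfromB (2 * ℓ k - 1) (mblk ℓ k) Letter.pos (Bplus ℓ r (k-1)) ⊆ _
    exact CfromB_subset_Padm hl1 hlmono hrpos hdvd hk2 (by omega)
      (by decide) (by decide)
      ⟨1, le_rfl, rfl, ell_le hlmono 1 (k-1) le_rfl (by omega)⟩
      (fun β hβ => (Finset.mem_sdiff.mp hβ).1)
  · intro k hk3 hkodd
    show CfromB (2 * ℓ k - 1) (mblk ℓ k) Letter.neg (Bminus ℓ r (k-1)) ⊆ _
    exact CfromB_subset_Padm hl1 hlmono hrpos hdvd (by omega) (by omega)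
      (by decide) (by decide)
      ⟨2, by omega, by omega, ell_le hlmono 2 (k-1) (by omega) (by omega)⟩
      (fun β hβ => (Finset.mem_sdiff.mp hβ).1)
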